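/- arXiv:1907.08203 — 2 statements merged into one kernel-verified Lean document; each statement's English description precedes it below -/
import Mathlib

section
/- (FKF Lemma) Let (X, τ₁, …, τₙ) be a saturated n-topological space. Then for all 1 ≤ x, y, z ≤ n with y ≤ max(x, z), and every subset A ⊆ X, f_x(k_y(f_z A)) = f_x(f_z A). -/
open Set

noncomputable section

/-- The closure operator of the topology `t`, as an element of the monoid
`Function.End (Set X)` of self-maps of the power set of `X` under composition. -/
def clOp {X : Type*} (t : TopologicalSpace X) : Function.End (Set X) := fun A => @closure X t A

/-- The interior operator of the topology `t`. -/
def intOp {X : Type*} (t : TopologicalSpace X) : Function.End (Set X) := fun A => @interior X t A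

/-- The frontier (topological boundary) operator of the topology `t`. -/
def frOp {X : Type*} (t : TopologicalSpace X) : Function.End (Set X) := fun A => @frontier X t A

/-- The set-complement operator. -/
def complOp {X : Type*} : Function.End (Set X) := fun A => Aᶜ

/-- An `n`-topological space: the topologies `τ 0 ⊇ τ 1 ⊇ ⋯ ⊇ τ (n-1)` are linearly
ordered by inclusion, with `τ 0` the finest: every `τ j`-open set is `τ i`-open
whenever `i ≤ j`. -/
def OrderedTop {X : Type*} {n : ℕ} (τ : Fin n → TopologicalSpace X) : Prop :=
  ∀ i j : Fin n, i ≤ j → ∀ U : Set X, (τ j).IsOpen U → (τ i).IsOpen U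

/-- Saturation: every nonempty `τ x`-open set has nonempty `τ y`-interior. -/
def SaturatedTop {X : Type*} {n : ℕ} (τ : Fin n → TopologicalSpace X) : Prop :=
  ∀ x y : Fin n, ∀ U : Set X, (τ x).IsOpen U → U.Nonempty → (@interior X (τ y) U).Nonempty

/-- `KFₙ⁰`: the submonoid of `Function.End (Set X)` generated by the closure,
interior and frontier operators of the topologies `τ j`. -/
def KF0 {X : Type*} {n : ℕ} (τ : Fin n → TopologicalSpace X) : Submonoid (Function.End (Set X)) :=
  Submonoid.closure (⋃ j : Fin n, {clOp (τ j), intOp (τ j), frOp (τ j)})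

/-- `KFₙ`: the submonoid of `Function.End (Set X)` generated by the closure and
frontier operators of the topologies `τ j` together with the complement operator. -/
def KF {X : Type*} {n : ℕ} (τ : Fin n → TopologicalSpace X) : Submonoid (Function.End (Set X)) :=
  Submonoid.closure ((⋃ j : Fin n, {clOp (τ j), frOp (τ j)}) ∪ {complOp})

/-- `p(n) = (5/24)n⁴ + (37/12)n³ + (79/24)n² + (101/12)n + 2`. -/
def pQ (n : ℕ) : ℚ :=
  5/24*(n:ℚ)^4 + 37/12*(n:ℚ)^3 + 79/24*(n:ℚ)^2 + 101/12*(n:ℚ) + 2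

/-- A saturated pair of topologies: every nonempty set open in either topology has
nonempty interior with respect to both. -/
def Saturated2 {X : Type*} (t1 t2 : TopologicalSpace X) : Prop :=
  ∀ U : Set X, (t1.IsOpen U ∨ t2.IsOpen U) → U.Nonempty →
    (@interior X t1 U).Nonempty ∧ (@interior X t2 U).Nonempty

/-- `KF₂⁰`: the submonoid generated by `{k₁, i₁, f₁, k₂, i₂, f₂}`. -/
def KF20 {X : Type*} (t1 t2 : TopologicalSpace X) : Submonoid (Function.End (Set X)) :=
  Submonoid.closure {clOp t1, intOp t1, frOp t1, clOp t2, intOp t2, frOp t2}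

/-- `KF₂`: the submonoid generated by `{k₁, f₁, k₂, f₂, c}`. -/
def KF2 {X : Type*} (t1 t2 : TopologicalSpace X) : Submonoid (Function.End (Set X)) :=
  Submonoid.closure {clOp t1, frOp t1, clOp t2, frOp t2, complOp}


section Aux
variable {X : Type*}

private lemma aux_cl_min (t : TopologicalSpace X) {s K : Set X} (h : s ⊆ K)
    (hK : @IsClosed X t K) : @closure X t s ⊆ K := by
  letI := t; exact closure_minimal h hK

private lemma aux_sub_cl (t : TopologicalSpace X) (s : Set X) : s ⊆ @closure X t s := by
  letI := t; exact subset_closure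

private lemma aux_cl_mono (t : TopologicalSpace X) {s u : Set X} (h : s ⊆ u) :
    @closure X t s ⊆ @closure X t u := by
  letI := t; exact closure_mono h

private lemma aux_isClosed_cl (t : TopologicalSpace X) (s : Set X) :
    @IsClosed X t (@closure X t s) := by
  letI := t; exact isClosed_closure

private lemma aux_isClosed_fr (t : TopologicalSpace X) (s : Set X) :
    @IsClosed X t (@frontier X t s) := by
  letI := t; exact isClosed_frontier

private lemma aux_int_max (t : TopologicalSpace X) {s u : Set X} (h : u ⊆ s)
    (hu : t.IsOpen u) : u ⊆ @interior X t s := by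
  letI := t; exact interior_maximal h hu

private lemma aux_int_mono (t : TopologicalSpace X) {s u : Set X} (h : s ⊆ u) :
    @interior X t s ⊆ @interior X t u := by
  letI := t; exact interior_mono h

private lemma aux_int_sub (t : TopologicalSpace X) (s : Set X) : @interior X t s ⊆ s := by
  letI := t; exact interior_subset

private lemma aux_isOpen_int (t : TopologicalSpace X) (s : Set X) :
    t.IsOpen (@interior X t s) := by
  letI := t; exact isOpen_interior

private lemma aux_mem_cl (t : TopologicalSpace X) {s : Set X} {a : X}
    (h : a ∈ @closure X t s) :
    ∀ o : Set X, t.IsOpen o → a ∈ o → (o ∩ s).Nonempty := by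
  letI := t; exact mem_closure_iff.mp h

private lemma aux_open_inter (t : TopologicalSpace X) {s u : Set X}
    (hs : t.IsOpen s) (hu : t.IsOpen u) : t.IsOpen (s ∩ u) := by
  letI := t
  have hs' : IsOpen s := hs
  have hu' : IsOpen u := hu
  exact hs'.inter hu'

private lemma aux_compl_open (t : TopologicalSpace X) {s : Set X}
    (h : @IsClosed X t s) : t.IsOpen sᶜ := by
  letI := t; exact h.isOpen_compl

private lemma aux_closed_compl_open (t : TopologicalSpace X) {s : Set X}
    (h : t.IsOpen sᶜ) : @IsClosed X t s := by
  letI := t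
  have h' : IsOpen sᶜ := h
  exact isOpen_compl_iff.mp h'

private lemma aux_cl_eq (t : TopologicalSpace X) {s : Set X}
    (h : @IsClosed X t s) : @closure X t s = s := by
  letI := t; exact h.closure_eq

private lemma aux_fr_eq (t : TopologicalSpace X) (s : Set X) :
    @frontier X t s = @closure X t s \ @interior X t s := rfl

end Aux

/-- FKF Lemma: in a saturated `n`-topological space, if
`y ≤ max(x, z)` then `fₓ(k_y(f_z A)) = fₓ(f_z A)` for all `A ⊆ X`. -/
theorem stmt_9 {X : Type*} {n : ℕ} (τ : Fin n → TopologicalSpace X)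
    (hord : OrderedTop τ) (hsat : SaturatedTop τ) (x y z : Fin n)
    (hy : y ≤ max x z) (A : Set X) :
    @frontier X (τ x) (@closure X (τ y) (@frontier X (τ z) A)) =
      @frontier X (τ x) (@frontier X (τ z) A) := by
  have closed_mono : ∀ (i j : Fin n), i ≤ j → ∀ S : Set X,
      @IsClosed X (τ j) S → @IsClosed X (τ i) S := fun i j hij S hS =>
    aux_closed_compl_open (τ i) (hord i j hij _ (aux_compl_open (τ j) hS))
  set S := @frontier X (τ z) A with hSdef
  have hSclosed : @IsClosed X (τ z) S := aux_isClosed_fr (τ z) A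
  rcases le_max_iff.mp hy with hyx | hyz
  · -- case y ≤ x
    have hkxy : @IsClosed X (τ y) (@closure X (τ x) S) :=
      closed_mono y x hyx _ (aux_isClosed_cl (τ x) S)
    have hsub : @closure X (τ y) S ⊆ @closure X (τ x) S :=
      aux_cl_min (τ y) (aux_sub_cl (τ x) S) hkxy
    have hcl : @closure X (τ x) (@closure X (τ y) S) = @closure X (τ x) S := by
      apply subset_antisymm
      · exact aux_cl_min (τ x) hsub (aux_isClosed_cl (τ x) S)
      · exact aux_cl_mono (τ x) (aux_sub_cl (τ y) S)
    have key : @interior X (τ x) (@closure X (τ y) S) ⊆ S := by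
      intro p hp
      by_contra hpS
      set U := @interior X (τ x) (@closure X (τ y) S) with hUdef
      have hUopen : (τ x).IsOpen U := aux_isOpen_int (τ x) _
      set m : Fin n := min x z with hm
      have hWopen : (τ m).IsOpen (U ∩ Sᶜ) :=
        aux_open_inter (τ m) (hord m x (min_le_left x z) _ hUopen)
          (hord m z (min_le_right x z) _ (aux_compl_open (τ z) hSclosed))
      have hWne : (U ∩ Sᶜ).Nonempty := ⟨p, hp, hpS⟩
      obtain ⟨v, hv⟩ := hsat m y _ hWopen hWne
      have hvW : v ∈ U ∩ Sᶜ := aux_int_sub (τ y) _ hv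
      have hvcl : v ∈ @closure X (τ y) S := aux_int_sub (τ x) _ hvW.1
      obtain ⟨w, hw1, hw2⟩ := aux_mem_cl (τ y) hvcl (@interior X (τ y) (U ∩ Sᶜ))
        (aux_isOpen_int (τ y) _) hv
      exact (aux_int_sub (τ y) _ hw1).2 hw2
    have hint : @interior X (τ x) (@closure X (τ y) S) = @interior X (τ x) S := by
      apply subset_antisymm
      · exact aux_int_max (τ x) key (aux_isOpen_int (τ x) _)
      · exact aux_int_mono (τ x) (aux_sub_cl (τ y) S)
    rw [aux_fr_eq, aux_fr_eq, hcl, hint]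
  · -- case y ≤ z : S is τ y-closed
    have h : @IsClosed X (τ y) S := closed_mono y z hyz _ hSclosed
    rw [aux_cl_eq (τ y) h]
end
end

section
/- (IFK/IFI Lemma) Let (X, τ₁, …, τₙ) be a saturated n-topological space. Then for all 1 ≤ x, y, z ≤ n and every subset A ⊆ X, i_x(f_y(k_z A)) = ∅ and i_x(f_y(i_z A)) = ∅. -/
open Set

noncomputable section

private lemma int_subset {X : Type*} (t : TopologicalSpace X) (s : Set X) :
    @interior X t s ⊆ s := by letI := t; exact interior_subset

private lemma int_mono {X : Type*} (t : TopologicalSpace X) {s u : Set X} (h : s ⊆ u) :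
    @interior X t s ⊆ @interior X t u := by letI := t; exact interior_mono h

private lemma int_maximal {X : Type*} (t : TopologicalSpace X) {s u : Set X}
    (h1 : u ⊆ s) (h2 : t.IsOpen u) : u ⊆ @interior X t s := by
  letI := t; exact interior_maximal h1 h2

private lemma int_isOpen {X : Type*} (t : TopologicalSpace X) (s : Set X) :
    t.IsOpen (@interior X t s) := by letI := t; exact isOpen_interior

private lemma cl_isClosed_compl {X : Type*} (t : TopologicalSpace X) (s : Set X) :
    t.IsOpen (@closure X t s)ᶜ := by letI := t; exact isClosed_closure.isOpen_compl

private lemma nonempty_inter_of_subset_closure {X : Type*} (t : TopologicalSpace X)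
    {O S : Set X} (hO : t.IsOpen O) (h : O ⊆ @closure X t S) (hne : O.Nonempty) :
    (O ∩ S).Nonempty := by
  letI := t
  by_contra hempty
  rw [Set.not_nonempty_iff_eq_empty] at hempty
  obtain ⟨p, hp⟩ := hne
  have hO' : IsOpen O := hO
  have h2 : p ∈ closure (O ∩ S) := hO'.inter_closure ⟨hp, h hp⟩
  rw [hempty, closure_empty] at h2
  exact h2

private lemma core {X : Type*} (ty tu : TopologicalSpace X)
    (hord : ∀ U : Set X, ty.IsOpen U → tu.IsOpen U)
    (hsat : ∀ U : Set X, tu.IsOpen U → U.Nonempty → (@interior X ty U).Nonempty)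
    {S V : Set X} (hS : tu.IsOpen S ∨ tu.IsOpen Sᶜ)
    (hV : ty.IsOpen V) (hVne : V.Nonempty) (hVfr : V ⊆ @frontier X ty S) : False := by
  have hfr : @frontier X ty S = @closure X ty S \ @interior X ty S := rfl
  have hVcl : V ⊆ @closure X ty S := fun p hp => ((hfr ▸ hVfr) hp).1
  have hVint : ∀ p ∈ V, p ∉ @interior X ty S := fun p hp => ((hfr ▸ hVfr) hp).2
  rcases hS with hS | hS
  · -- S is tu-open
    have h1 : (V ∩ S).Nonempty := nonempty_inter_of_subset_closure ty hV hVcl hVne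
    have h2 : tu.IsOpen (V ∩ S) := tu.isOpen_inter _ _ (hord V hV) hS
    obtain ⟨q, hq⟩ := hsat _ h2 h1
    have hqV : q ∈ V := (int_subset ty _ hq).1
    have hqint : q ∈ @interior X ty S := int_mono ty Set.inter_subset_right hq
    exact hVint q hqV hqint
  · -- Sᶜ is tu-open
    by_cases hc : (V ∩ Sᶜ).Nonempty
    · have h2 : tu.IsOpen (V ∩ Sᶜ) := tu.isOpen_inter _ _ (hord V hV) hS
      obtain ⟨q, hq⟩ := hsat _ h2 hc
      have hOopen : ty.IsOpen (@interior X ty (V ∩ Sᶜ)) := int_isOpen ty _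
      have hOsub : @interior X ty (V ∩ Sᶜ) ⊆ V ∩ Sᶜ := int_subset ty _
      have hOcl : @interior X ty (V ∩ Sᶜ) ⊆ @closure X ty S :=
        fun p hp => hVcl (hOsub hp).1
      obtain ⟨r, hr⟩ := nonempty_inter_of_subset_closure ty hOopen hOcl ⟨q, hq⟩
      exact (hOsub hr.1).2 hr.2
    · rw [Set.not_nonempty_iff_eq_empty] at hc
      have hsub : V ⊆ S := by
        intro p hp
        by_contra hpS
        have hne2 : (V ∩ Sᶜ).Nonempty := ⟨p, hp, hpS⟩
        rw [hc] at hne2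
        exact Set.not_nonempty_empty hne2
      obtain ⟨p, hp⟩ := hVne
      exact hVint p hp (int_maximal ty hsub hV hp)

private lemma ifr_empty {X : Type*} {n : ℕ} (τ : Fin n → TopologicalSpace X)
    (hord : OrderedTop τ) (hsat : SaturatedTop τ) (x y z : Fin n) {S : Set X}
    (hS : (τ z).IsOpen S ∨ (τ z).IsOpen Sᶜ) :
    @interior X (τ x) (@frontier X (τ y) S) = ∅ := by
  by_contra h
  rw [← Ne, ← Set.nonempty_iff_ne_empty] at h
  have hUopen : (τ x).IsOpen (@interior X (τ x) (@frontier X (τ y) S)) :=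
    int_isOpen (τ x) _
  have hVne : (@interior X (τ y) (@interior X (τ x) (@frontier X (τ y) S))).Nonempty :=
    hsat x y _ hUopen h
  refine core (τ y) (τ (min y z)) (fun W hW => hord (min y z) y (min_le_left _ _) W hW)
      (fun W hW hWne => hsat (min y z) y W hW hWne)
      (S := S) ?_ (int_isOpen (τ y) _) hVne ?_
  · rcases hS with hS | hS
    · exact Or.inl (hord (min y z) z (min_le_right _ _) S hS)
    · exact Or.inr (hord (min y z) z (min_le_right _ _) Sᶜ hS)
  · exact subset_trans (int_subset (τ y) _) (int_subset (τ x) _)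

/-- IFK/IFI Lemma: in a saturated `n`-topological space,
`iₓ(f_y(k_z A)) = ∅` and `iₓ(f_y(i_z A)) = ∅` for all indices and all `A ⊆ X`. -/
theorem stmt_11 {X : Type*} {n : ℕ} (τ : Fin n → TopologicalSpace X)
    (hord : OrderedTop τ) (hsat : SaturatedTop τ) (x y z : Fin n) (A : Set X) :
    @interior X (τ x) (@frontier X (τ y) (@closure X (τ z) A)) = ∅ ∧
      @interior X (τ x) (@frontier X (τ y) (@interior X (τ z) A)) = ∅ := by
  constructor
  · exact ifr_empty τ hord hsat x y z
      (Or.inr (cl_isClosed_compl (τ z) A))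
  · exact ifr_empty τ hord hsat x y z (Or.inl (int_isOpen (τ z) A))
end
end
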